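/- arXiv:2602.21210 — 10 statements merged into one kernel-verified Lean document; each statement's English description precedes it below -/
import Mathlib

section
/- Let A be a δ-Lie algebra over ℂ (an anticommutative algebra satisfying the δ-Lie identity) with δ ≠ 1. Then A is antiassociative, i.e., (x*y)*z = −x*(y*z) for all x, y, z ∈ A. -/
/-- A δ-Lie algebra over ℂ (anticommutative, satisfying the δ-Lie
identity) with δ ≠ 1 is antiassociative. -/
theorem deltaLie_antiassociative
    (A : Type*) [AddCommGroup A] [Module ℂ A]
    (mul : A →ₗ[ℂ] A →ₗ[ℂ] A) (δ : ℂ) (hδ : δ ≠ 1)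
    (anticomm : ∀ x y : A, mul x y = - mul y x)
    (dlie : ∀ x y z : A,
      mul (mul x y) z = δ • (mul (mul x z) y + mul x (mul y z))) :
    ∀ x y z : A, mul (mul x y) z = - mul x (mul y z) := by
  intro x y z
  set a := mul (mul x y) z with ha
  set b := mul (mul x z) y with hb
  set d := mul (mul y z) x with hd
  have hx : mul x (mul y z) = -d := anticomm _ _
  have h1 : a = δ • (b - d) := by
    rw [ha, dlie x y z, hx, ← hb]; rw [sub_eq_add_neg]
  have h3 : d = δ • (b - a) := by
    have e1 : mul (mul y x) z = -a := by
      rw [anticomm y x, map_neg, LinearMap.neg_apply, ha]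
    have e2 : mul y (mul z x) = b := by
      rw [anticomm z x, map_neg, anticomm y, hb, neg_neg]
    rw [hd, dlie y z x, e1, e2]
    rw [sub_eq_add_neg, add_comm]
  have key : (1 - δ) • (a - d) = 0 := by
    rw [sub_smul, one_smul, sub_eq_zero]
    calc a - d = δ • (b - d) - δ • (b - a) := by rw [← h1, ← h3]
    _ = δ • (a - d) := by rw [smul_sub, smul_sub, smul_sub]; abel
  have h0 : a - d = 0 := by
    rcases smul_eq_zero.mp key with h | h
    · exact absurd (by linear_combination -h) hδ
    · exact h
  rw [hx, neg_neg, ← sub_eq_zero]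
  exact h0
end

section
/- Let A be an anticommutative antiassociative algebra over ℂ. Then A is a (−1/2)-Lie algebra, i.e., (x*y)*z = (−1/2)*((x*z)*y + x*(y*z)) for all x, y, z ∈ A. -/
/-- An anticommutative antiassociative algebra over ℂ is a
(−1/2)-Lie algebra. -/
theorem anticomm_antiassoc_is_negHalfLie
    (A : Type*) [AddCommGroup A] [Module ℂ A]
    (mul : A →ₗ[ℂ] A →ₗ[ℂ] A)
    (anticomm : ∀ x y : A, mul x y = - mul y x)
    (antiassoc : ∀ x y z : A, mul (mul x y) z = - mul x (mul y z)) :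
    ∀ x y z : A,
      mul (mul x y) z = (-(1/2) : ℂ) • (mul (mul x z) y + mul x (mul y z)) := by
  intro x y z
  have h2 : mul (mul x z) y = mul x (mul y z) := by
    rw [antiassoc x z y, anticomm z y, map_neg, neg_neg]
  rw [antiassoc x y z, h2]
  module
end

section
/- Let A be a δ-Lie algebra over ℂ with δ ≠ 1 and δ ≠ −1/2. Then A is 2-step nilpotent, i.e., (x*y)*z = 0 for all x, y, z ∈ A. -/
/-- A δ-Lie algebra over ℂ with δ ≠ 1 and δ ≠ −1/2 is
2-step nilpotent. -/
theorem deltaLie_two_step_nilpotent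
    (A : Type*) [AddCommGroup A] [Module ℂ A]
    (mul : A →ₗ[ℂ] A →ₗ[ℂ] A) (δ : ℂ) (hδ1 : δ ≠ 1) (hδ2 : δ ≠ -(1/2))
    (anticomm : ∀ x y : A, mul x y = - mul y x)
    (dlie : ∀ x y z : A,
      mul (mul x y) z = δ • (mul (mul x z) y + mul x (mul y z))) :
    ∀ x y z : A, mul (mul x y) z = 0 := by
  intro x y z
  set a := mul (mul x y) z with ha
  set b := mul (mul y z) x with hb
  set c := mul (mul z x) y with hc
  have e1 : a = δ • (-c + -b) := by
    have h := dlie x y z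
    rw [anticomm x z, anticomm x (mul y z)] at h
    simpa [map_neg, LinearMap.neg_apply] using h
  have e2 : b = δ • (-a + -c) := by
    have h := dlie y z x
    rw [anticomm y x, anticomm y (mul z x)] at h
    simpa [map_neg, LinearMap.neg_apply] using h
  have e3 : c = δ • (-b + -a) := by
    have h := dlie z x y
    rw [anticomm z y, anticomm z (mul x y)] at h
    simpa [map_neg, LinearMap.neg_apply] using h
  have hsum : a + b + c = 0 := by
    have h2 : (1 + 2*δ) • (a + b + c) = 0 := by
      linear_combination (norm := module) e1 + e2 + e3
    have hne : (1 + 2*δ) ≠ 0 := by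
      intro h
      apply hδ2
      linear_combination h / 2
    exact (smul_eq_zero.mp h2).resolve_left hne
  have ha0 : (1 - δ) • a = 0 := by
    have hbc : -c + -b = a := by
      have := hsum
      linear_combination (norm := module) -hsum
    rw [hbc] at e1
    linear_combination (norm := module) e1
  have hne1 : (1 - δ) ≠ 0 := by
    intro h
    apply hδ1
    linear_combination -h
  exact (smul_eq_zero.mp ha0).resolve_left hne1
end

section
/- Let A be an algebra over ℂ satisfying the anti-right-alternative identity (x*y)*z + x*(y*z) = −((x*z)*y + x*(z*y)) for all x, y, z ∈ A. Then A is Jacobi–Jordan admissible: defining x∘y := x*y + y*x, one has x∘(y∘z) + y∘(z∘x) + z∘(x∘y) = 0 for all x, y, z ∈ A. -/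
/-- The symmetrized product x∘y := x*y + y*x of a (non-associative)
ℂ-algebra. -/
def symProd {A : Type*} [AddCommGroup A] [Module ℂ A]
    (mul : A →ₗ[ℂ] A →ₗ[ℂ] A) (x y : A) : A :=
  mul x y + mul y x

/-- An algebra over ℂ satisfying the anti-right-alternative
identity is Jacobi–Jordan admissible: the symmetrized product satisfies
x∘(y∘z) + y∘(z∘x) + z∘(x∘y) = 0. -/
theorem antiRightAlternative_JacobiJordan_admissible
    (A : Type*) [AddCommGroup A] [Module ℂ A]
    (mul : A →ₗ[ℂ] A →ₗ[ℂ] A)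
    (ara : ∀ x y z : A,
      mul (mul x y) z + mul x (mul y z)
        = -(mul (mul x z) y + mul x (mul z y))) :
    ∀ x y z : A,
      symProd mul x (symProd mul y z) + symProd mul y (symProd mul z x) +
        symProd mul z (symProd mul x y) = 0 := by
  intro x y z
  have h1 := ara x y z
  have h2 := ara y z x
  have h3 := ara z x y
  simp only [symProd, map_add, LinearMap.add_apply]
  linear_combination (norm := abel) h1 + h2 + h3
end

section
/- Let A be an algebra over ℂ and δ₁, δ₂ ∈ ℂ with δ₁ ≠ δ₂. If A is both a δ₁-Leibniz algebra and a δ₂-Leibniz algebra, then A is 2-step nilpotent: (x*y)*z = 0 and x*(y*z) = 0 for all x, y, z ∈ A. -/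
/-- An algebra over ℂ that is simultaneously a δ₁-Leibniz algebra
and a δ₂-Leibniz algebra for δ₁ ≠ δ₂ is 2-step nilpotent. -/
theorem two_delta_Leibniz_two_step_nilpotent
    (A : Type*) [AddCommGroup A] [Module ℂ A]
    (mul : A →ₗ[ℂ] A →ₗ[ℂ] A) (δ₁ δ₂ : ℂ) (hδ : δ₁ ≠ δ₂)
    (hL1 : ∀ x y z : A,
      mul (mul x y) z = δ₁ • (mul (mul x z) y + mul x (mul y z)))
    (hL2 : ∀ x y z : A,
      mul (mul x y) z = δ₂ • (mul (mul x z) y + mul x (mul y z))) :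
    ∀ x y z : A, mul (mul x y) z = 0 ∧ mul x (mul y z) = 0 := by
  have hS : ∀ x y z : A, mul (mul x z) y + mul x (mul y z) = 0 := by
    intro x y z
    have h := (hL1 x y z).symm.trans (hL2 x y z)
    have h2 : (δ₁ - δ₂) • (mul (mul x z) y + mul x (mul y z)) = 0 := by
      rw [sub_smul, h, sub_self]
    exact (smul_eq_zero.mp h2).resolve_left (sub_ne_zero.mpr hδ)
  have hleft : ∀ x y z : A, mul (mul x y) z = 0 := by
    intro x y z; rw [hL1 x y z, hS, smul_zero]
  intro x y z
  refine ⟨hleft x y z, ?_⟩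
  have h3 := hS x y z
  rwa [hleft, zero_add] at h3
end

section
/- Let A be a δ-Leibniz algebra over ℂ with δ ≠ −1. Then A is a (δ/(1+δ))-right-symmetric algebra: for all x, y, z ∈ A, (x*y)*z − (δ/(1+δ))*(x*(y*z)) = (x*z)*y − (δ/(1+δ))*(x*(z*y)). -/
/-- A δ-Leibniz algebra over ℂ with δ ≠ −1 is a
(δ/(1+δ))-right-symmetric algebra. -/
theorem deltaLeibniz_rightSymmetric
    (A : Type*) [AddCommGroup A] [Module ℂ A]
    (mul : A →ₗ[ℂ] A →ₗ[ℂ] A) (δ : ℂ) (hδ : δ ≠ -1)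
    (hL : ∀ x y z : A,
      mul (mul x y) z = δ • (mul (mul x z) y + mul x (mul y z))) :
    ∀ x y z : A,
      mul (mul x y) z - (δ / (1 + δ)) • mul x (mul y z)
        = mul (mul x z) y - (δ / (1 + δ)) • mul x (mul z y) := by
  intro x y z
  have hne : (1 + δ) ≠ 0 := fun h => hδ (by linear_combination h)
  have h1 := hL x y z
  have h2 := hL x z y
  have key : (1 + δ) • (mul (mul x y) z - mul (mul x z) y)
      = δ • (mul x (mul y z) - mul x (mul z y)) := by
    linear_combination (norm := module) h1 - h2
  apply smul_right_injective A hne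
  dsimp only
  rw [smul_sub, smul_sub, smul_smul, smul_smul,
    mul_div_cancel₀ _ hne]
  linear_combination (norm := module) key
end

section
/- Let A be a δ-Leibniz algebra over ℂ with δ ≠ 0. Then A is Lie admissible (the commutator [a,b] := a*b − b*a satisfies the Jacobi identity [[x,y],z] + [[y,z],x] + [[z,x],y] = 0 for all x,y,z) if and only if A satisfies (x*y)*z − (y*x)*z + (y*z)*x − (z*y)*x + (z*x)*y − (x*z)*y = 0 for all x, y, z ∈ A. -/
/-- A δ-Leibniz algebra over ℂ with δ ≠ 0 is Lie admissible iff
it satisfies (xy)z − (yx)z + (yz)x − (zy)x + (zx)y − (xz)y = 0. -/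
theorem deltaLeibniz_lieAdmissible_iff
    (A : Type*) [AddCommGroup A] [Module ℂ A]
    (mul : A →ₗ[ℂ] A →ₗ[ℂ] A) (δ : ℂ) (hδ : δ ≠ 0)
    (hL : ∀ x y z : A,
      mul (mul x y) z = δ • (mul (mul x z) y + mul x (mul y z))) :
    (∀ x y z : A,
        (mul (mul x y - mul y x) z - mul z (mul x y - mul y x)) +
        (mul (mul y z - mul z y) x - mul x (mul y z - mul z y)) +
        (mul (mul z x - mul x z) y - mul y (mul z x - mul x z)) = 0) ↔
    (∀ x y z : A,
        mul (mul x y) z - mul (mul y x) z + mul (mul y z) x - mul (mul z y) x +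
          mul (mul z x) y - mul (mul x z) y = 0) := by
  have h2 : ∀ x y z : A,
      mul x (mul y z) = δ⁻¹ • mul (mul x y) z - mul (mul x z) y := by
    intro x y z
    rw [hL x y z, smul_smul, inv_mul_cancel₀ hδ, one_smul]
    abel
  have key : ∀ x y z : A,
      (mul (mul x y - mul y x) z - mul z (mul x y - mul y x)) +
        (mul (mul y z - mul z y) x - mul x (mul y z - mul z y)) +
        (mul (mul z x - mul x z) y - mul y (mul z x - mul x z)) =
      (-δ⁻¹) • (mul (mul x y) z - mul (mul y x) z + mul (mul y z) x -
          mul (mul z y) x + mul (mul z x) y - mul (mul x z) y) := by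
    intro x y z
    simp only [map_sub, LinearMap.sub_apply]
    rw [h2 z x y, h2 z y x, h2 x y z, h2 x z y, h2 y z x, h2 y x z]
    module
  constructor
  · intro h x y z
    have hk := key x y z
    rw [h x y z] at hk
    have h0 : (-δ⁻¹ : ℂ) ≠ 0 := by
      simp [hδ]
    exact (smul_eq_zero.mp hk.symm).resolve_left h0
  · intro h x y z
    rw [key x y z, h x y z, smul_zero]
end

section
/- Let A be a symmetric δ-Leibniz algebra over ℂ, and write x² := x*x. Then: (A) if δ ≠ 1/2, then x²*x = 0, x*x² = 0 and x²*x² = 0 for all x ∈ A (hence xⁿ = 0 for all n > 2, i.e., A is a nilalgebra of nilindex 3); (B) if δ = 1/2, then x²*x = x*x² and x²*x² = (x²*x)*x for all x ∈ A (hence, by Albert's criterion, A is power-associative). -/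
/-- Let A be a symmetric δ-Leibniz algebra over ℂ. Then
(A) if δ ≠ 1/2 then x²x = 0, xx² = 0 and x²x² = 0 (A is a nilalgebra of
nilindex 3); (B) if δ = 1/2 then x²x = xx² and x²x² = (x²x)x (so A is
power-associative by Albert's criterion). -/
theorem symmetric_deltaLeibniz_nil_or_powerAssociative
    (A : Type*) [AddCommGroup A] [Module ℂ A]
    (mul : A →ₗ[ℂ] A →ₗ[ℂ] A) (δ : ℂ)
    (rightL : ∀ x y z : A,
      mul (mul x y) z = δ • (mul (mul x z) y + mul x (mul y z)))
    (leftL : ∀ x y z : A,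
      mul x (mul y z) = δ • (mul (mul x y) z + mul y (mul x z))) :
    (δ ≠ 1/2 → ∀ x : A,
        mul (mul x x) x = 0 ∧ mul x (mul x x) = 0 ∧
        mul (mul x x) (mul x x) = 0) ∧
    (δ = 1/2 → ∀ x : A,
        mul (mul x x) x = mul x (mul x x) ∧
        mul (mul x x) (mul x x) = mul (mul (mul x x) x) x) := by
  have hsym : ∀ x : A, mul (mul x x) x = mul x (mul x x) := fun x =>
    (rightL x x x).trans (leftL x x x).symm
  have hkey : ∀ x : A, (1 - 2 * δ) • mul (mul x x) x = 0 := by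
    intro x
    have h := rightL x x x
    rw [← hsym x] at h
    linear_combination (norm := module) h
  have hss : ∀ x : A, mul (mul (mul x x) x) x
      = δ • (mul (mul (mul x x) x) x + mul (mul x x) (mul x x)) :=
    fun x => rightL (mul x x) x x
  constructor
  · intro hδ x
    have h12 : (1 - 2 * δ) ≠ 0 := by
      intro h; apply hδ; linear_combination -1/2 * h
    have ht : mul (mul x x) x = 0 :=
      (smul_eq_zero.mp (hkey x)).resolve_left h12
    refine ⟨ht, by rw [← hsym x, ht], ?_⟩
    by_cases h0 : δ = 0
    · have h := rightL x x (mul x x)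
      rw [h0, zero_smul] at h
      exact h
    · have h := hss x
      rw [ht, map_zero, LinearMap.zero_apply, zero_add] at h
      exact (smul_eq_zero.mp h.symm).resolve_left h0
  · intro hδ x
    refine ⟨hsym x, ?_⟩
    have h := hss x
    rw [hδ] at h
    linear_combination (norm := module) (-2 : ℂ) • h
end

section
/- Let A be a symmetric δ-Leibniz algebra over ℂ and define [x,y] := x*y − y*x. Then (A, [·,·]) is a δ-Lie algebra: [x,y] = −[y,x] and [[x,y],z] = δ*([[x,z],y] + [x,[y,z]]) for all x, y, z ∈ A. Moreover, if δ ∉ {1, −1/2}, then [[x,y],z] = 0 for all x, y, z ∈ A, i.e., (A, [·,·]) is a 2-step nilpotent Lie algebra. -/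
/-- For a symmetric δ-Leibniz algebra over ℂ, the commutator
[x,y] := x*y − y*x makes it a δ-Lie algebra; moreover if δ ∉ {1, −1/2} the
resulting bracket is 2-step nilpotent. -/
theorem symmetric_deltaLeibniz_commutator_deltaLie
    (A : Type*) [AddCommGroup A] [Module ℂ A]
    (mul : A →ₗ[ℂ] A →ₗ[ℂ] A) (δ : ℂ)
    (rightL : ∀ x y z : A,
      mul (mul x y) z = δ • (mul (mul x z) y + mul x (mul y z)))
    (leftL : ∀ x y z : A,
      mul x (mul y z) = δ • (mul (mul x y) z + mul y (mul x z))) :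
    (∀ x y : A, mul x y - mul y x = -(mul y x - mul x y)) ∧
    (∀ x y z : A,
      mul (mul x y - mul y x) z - mul z (mul x y - mul y x)
        = δ • ((mul (mul x z - mul z x) y - mul y (mul x z - mul z x)) +
               (mul x (mul y z - mul z y) - mul (mul y z - mul z y) x))) ∧
    (δ ≠ 1 → δ ≠ -(1/2) → ∀ x y z : A,
      mul (mul x y - mul y x) z - mul z (mul x y - mul y x) = 0) := by
  refine ⟨fun x y => by rw [neg_sub], ?_, ?_⟩
  · intro x y z
    simp only [map_sub, LinearMap.sub_apply]
    linear_combination (norm := module)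
      rightL x y z - rightL y x z - leftL z x y + leftL z y x
  · intro h1 h2 x y z
    have key : (2*δ^2 - δ - 1) •
        (mul (mul x y) z - mul (mul y x) z - mul z (mul x y) + mul z (mul y x))
        = 0 := by
      linear_combination (norm := module)
        (-(1+δ)) • rightL x y z + (-δ) • rightL x z y + (1+δ) • rightL y x z +
        δ • rightL y z x + δ • rightL z x y + (-δ) • rightL z y x +
        (-δ) • leftL x y z + δ • leftL x z y + δ • leftL y x z +
        (-δ) • leftL y z x + (1+δ) • leftL z x y + (-(1+δ)) • leftL z y x
    have hne : (2*δ^2 - δ - 1) ≠ 0 := by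
      have : 2*δ^2 - δ - 1 = (δ - 1) * (2*δ + 1) := by ring
      rw [this]
      refine mul_ne_zero (sub_ne_zero.mpr h1) (fun h => h2 ?_)
      linear_combination h / 2
    have h0 := (smul_eq_zero.mp key).resolve_left hne
    simp only [map_sub, LinearMap.sub_apply]
    linear_combination (norm := module) h0
end

section
/- Let Z be a δ-Zinbiel algebra over ℂ with δ ≠ 0. Then Z is Lie admissible (the commutator [a,b] := a*b − b*a satisfies the Jacobi identity) if and only if δ = 1/2 or Z satisfies x*(y*z) − y*(x*z) + y*(z*x) − z*(y*x) + z*(x*y) − x*(z*y) = 0 for all x, y, z ∈ Z. -/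
/-- A δ-Zinbiel algebra over ℂ with δ ≠ 0 is Lie admissible iff
δ = 1/2 or it satisfies x(yz) − y(xz) + y(zx) − z(yx) + z(xy) − x(zy) = 0. -/
theorem deltaZinbiel_lieAdmissible_iff
    (Z : Type*) [AddCommGroup Z] [Module ℂ Z]
    (mul : Z →ₗ[ℂ] Z →ₗ[ℂ] Z) (δ : ℂ) (hδ : δ ≠ 0)
    (hZ : ∀ x y z : Z,
      mul x (mul y z) = δ • (mul (mul x y) z - mul x (mul z y))) :
    (∀ x y z : Z,
        (mul (mul x y - mul y x) z - mul z (mul x y - mul y x)) +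
        (mul (mul y z - mul z y) x - mul x (mul y z - mul z y)) +
        (mul (mul z x - mul x z) y - mul y (mul z x - mul x z)) = 0) ↔
    (δ = 1/2 ∨ ∀ x y z : Z,
        mul x (mul y z) - mul y (mul x z) + mul y (mul z x) - mul z (mul y x) +
          mul z (mul x y) - mul x (mul z y) = 0) := by
  have h' : ∀ a b c : Z,
      mul (mul a b) c = δ⁻¹ • mul a (mul b c) + mul a (mul c b) := by
    intro a b c
    have h := hZ a b c
    have h2 : δ⁻¹ • mul a (mul b c) = mul (mul a b) c - mul a (mul c b) := by
      rw [h, inv_smul_smul₀ hδ]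
    rw [h2]; abel
  have key : ∀ x y z : Z,
      (mul (mul x y - mul y x) z - mul z (mul x y - mul y x)) +
        (mul (mul y z - mul z y) x - mul x (mul y z - mul z y)) +
        (mul (mul z x - mul x z) y - mul y (mul z x - mul x z)) =
      (δ⁻¹ - 2) • (mul x (mul y z) - mul y (mul x z) + mul y (mul z x) -
        mul z (mul y x) + mul z (mul x y) - mul x (mul z y)) := by
    intro x y z
    simp only [map_sub, LinearMap.sub_apply]
    rw [h' x y z, h' y x z, h' y z x, h' z y x, h' z x y, h' x z y]
    module
  have hcoef : δ = 1/2 ↔ δ⁻¹ - 2 = 0 := by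
    constructor
    · rintro rfl; norm_num
    · intro h
      have h2 : δ⁻¹ = 2 := sub_eq_zero.mp h
      rw [← inv_inv δ, h2]
      norm_num
  constructor
  · intro hJ
    by_cases h : δ = 1/2
    · exact Or.inl h
    · right
      intro x y z
      have hk := key x y z
      rw [hJ x y z] at hk
      have hc : δ⁻¹ - 2 ≠ 0 := fun hc => h (hcoef.mpr hc)
      rcases smul_eq_zero.mp hk.symm with h1 | h1
      · exact absurd h1 hc
      · exact h1
  · rintro (h | h) x y z
    · rw [key x y z, hcoef.mp h, zero_smul]
    · rw [key x y z, h x y z, smul_zero]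
end
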